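/- arXiv:2306.06287 — 3 statements merged into one kernel-verified Lean document; each statement's English description precedes it below -/
import Mathlib

section
/- Let S ⊆ ℝ be a convex set, let β ∈ ℝ, let V₁, V₂, V₃ : ℝ → ℝ be concave on S with V₁(ρ), V₂(ρ), V₃(ρ) > 0 for every ρ ∈ S, and let F : ℝ → ℝ be concave on S. Then for every d ≥ 1 the scalar mean-field-control integrand (ρ, m, s, n) ↦ ‖m‖²/(2V₁(ρ)) + s²/(2V₂(ρ)) + β²‖n‖²/(2V₃(ρ)) − F(ρ) is convex on the convex set S × ℝᵈ × ℝ × ℝᵈ. -/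
private lemma frac_key (a b s₁ s₂ v₁ v₂ w N : ℝ) (ha : 0 ≤ a) (hb : 0 ≤ b)
    (hab : a + b = 1) (hv₁ : 0 < v₁) (hv₂ : 0 < v₂) (hw : a * v₁ + b * v₂ ≤ w)
    (hs₁ : 0 ≤ s₁) (hs₂ : 0 ≤ s₂) (hN0 : 0 ≤ N) (hN : N ≤ a * s₁ + b * s₂) :
    N ^ 2 / w ≤ a * (s₁ ^ 2 / v₁) + b * (s₂ ^ 2 / v₂) := by
  have hv : 0 < a * v₁ + b * v₂ := by
    rcases ha.lt_or_eq with h | h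
    · nlinarith [mul_pos h hv₁, mul_nonneg hb hv₂.le]
    · nlinarith [mul_pos (show (0:ℝ) < b by linarith) hv₂]
  have hw0 : 0 < w := lt_of_lt_of_le hv hw
  have h1 : N ^ 2 / w ≤ (a * s₁ + b * s₂) ^ 2 / (a * v₁ + b * v₂) := by
    apply div_le_div₀ (by positivity) (by nlinarith) hv hw
  refine h1.trans ?_
  rw [div_le_iff₀ hv]
  have key : (a * s₁ + b * s₂) ^ 2 ≤
      (a * (s₁ ^ 2 / v₁) + b * (s₂ ^ 2 / v₂)) * (a * v₁ + b * v₂) := by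
    have e₁ : s₁ ^ 2 / v₁ * v₁ = s₁ ^ 2 := div_mul_cancel₀ _ hv₁.ne'
    have e₂ : s₂ ^ 2 / v₂ * v₂ = s₂ ^ 2 := div_mul_cancel₀ _ hv₂.ne'
    have h2 : s₁ ^ 2 / v₁ * v₂ + s₂ ^ 2 / v₂ * v₁ ≥ 2 * s₁ * s₂ := by
      rw [ge_iff_le, div_mul_eq_mul_div, div_mul_eq_mul_div, div_add_div _ _ hv₁.ne' hv₂.ne',
        le_div_iff₀ (by positivity)]
      nlinarith [sq_nonneg (s₁ * v₂ - s₂ * v₁)]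
    have h3 : a * b * (2 * s₁ * s₂) ≤ a * b * (s₁ ^ 2 / v₁ * v₂ + s₂ ^ 2 / v₂ * v₁) :=
      mul_le_mul_of_nonneg_left h2 (mul_nonneg ha hb)
    have expand : (a * (s₁ ^ 2 / v₁) + b * (s₂ ^ 2 / v₂)) * (a * v₁ + b * v₂)
        = a ^ 2 * (s₁ ^ 2 / v₁ * v₁) + b ^ 2 * (s₂ ^ 2 / v₂ * v₂)
          + a * b * (s₁ ^ 2 / v₁ * v₂ + s₂ ^ 2 / v₂ * v₁) := by ring
    rw [expand, e₁, e₂]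
    nlinarith [h3]
  linarith

/-- Convexity of the scalar mean-field-control integrand
`(ρ, m, s, n) ↦ ‖m‖²/(2V₁ρ) + s²/(2V₂ρ) + β²‖n‖²/(2V₃ρ) − F ρ`
on `S × ℝᵈ × ℝ × ℝᵈ`, for `V₁, V₂, V₃` positive concave and `F` concave on `S`. -/
theorem scalar_mfc_integrand_convex (S : Set ℝ) (hS : Convex ℝ S) (β : ℝ)
    (V₁ V₂ V₃ F : ℝ → ℝ)
    (hV₁ : ConcaveOn ℝ S V₁) (hV₂ : ConcaveOn ℝ S V₂) (hV₃ : ConcaveOn ℝ S V₃)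
    (hV₁pos : ∀ ρ ∈ S, 0 < V₁ ρ) (hV₂pos : ∀ ρ ∈ S, 0 < V₂ ρ)
    (hV₃pos : ∀ ρ ∈ S, 0 < V₃ ρ)
    (hF : ConcaveOn ℝ S F) (d : ℕ) (hd : 1 ≤ d) :
    ConvexOn ℝ
      (S ×ˢ (Set.univ : Set (EuclideanSpace ℝ (Fin d))) ×ˢ (Set.univ : Set ℝ) ×ˢ
        (Set.univ : Set (EuclideanSpace ℝ (Fin d))))
      (fun q : ℝ × EuclideanSpace ℝ (Fin d) × ℝ × EuclideanSpace ℝ (Fin d) =>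
        ‖q.2.1‖ ^ 2 / (2 * V₁ q.1) + q.2.2.1 ^ 2 / (2 * V₂ q.1)
          + β ^ 2 * ‖q.2.2.2‖ ^ 2 / (2 * V₃ q.1) - F q.1) := by
  constructor
  · exact hS.prod (convex_univ.prod (convex_univ.prod convex_univ))
  intro p hp q hq a b ha hb hab
  have hpS : p.1 ∈ S := hp.1
  have hqS : q.1 ∈ S := hq.1
  have hρ : a * p.1 + b * q.1 ∈ S := hS hpS hqS ha hb hab
  have hcomb : (a • p + b • q).1 = a * p.1 + b * q.1 := rfl
  have hF' : a * F p.1 + b * F q.1 ≤ F (a * p.1 + b * q.1) := hF.2 hpS hqS ha hb hab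
  -- concavity facts for the mobilities (times 2)
  have hW : ∀ (V : ℝ → ℝ), ConcaveOn ℝ S V →
      a * (2 * V p.1) + b * (2 * V q.1) ≤ 2 * V (a * p.1 + b * q.1) := by
    intro V hV
    have := hV.2 hpS hqS ha hb hab
    simp only [smul_eq_mul] at this
    linarith
  -- term 1
  have t1 : ‖(a • p + b • q).2.1‖ ^ 2 / (2 * V₁ ((a • p + b • q).1)) ≤
      a * (‖p.2.1‖ ^ 2 / (2 * V₁ p.1)) + b * (‖q.2.1‖ ^ 2 / (2 * V₁ q.1)) := by
    rw [hcomb]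
    refine frac_key a b ‖p.2.1‖ ‖q.2.1‖ _ _ _ _ ha hb hab
      (by linarith [hV₁pos _ hpS]) (by linarith [hV₁pos _ hqS]) (hW V₁ hV₁)
      (norm_nonneg _) (norm_nonneg _) (norm_nonneg _) ?_
    have : (a • p + b • q).2.1 = a • p.2.1 + b • q.2.1 := rfl
    rw [this]
    calc ‖a • p.2.1 + b • q.2.1‖ ≤ ‖a • p.2.1‖ + ‖b • q.2.1‖ := norm_add_le _ _
      _ = a * ‖p.2.1‖ + b * ‖q.2.1‖ := by
          rw [norm_smul, norm_smul, Real.norm_eq_abs, Real.norm_eq_abs,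
            abs_of_nonneg ha, abs_of_nonneg hb]
  -- term 2
  have t2 : ((a • p + b • q).2.2.1) ^ 2 / (2 * V₂ ((a • p + b • q).1)) ≤
      a * (p.2.2.1 ^ 2 / (2 * V₂ p.1)) + b * (q.2.2.1 ^ 2 / (2 * V₂ q.1)) := by
    rw [hcomb]
    have e : ∀ x : ℝ, x ^ 2 = |x| ^ 2 := fun x => (sq_abs x).symm
    rw [e ((a • p + b • q).2.2.1), e p.2.2.1, e q.2.2.1]
    refine frac_key a b |p.2.2.1| |q.2.2.1| _ _ _ _ ha hb hab
      (by linarith [hV₂pos _ hpS]) (by linarith [hV₂pos _ hqS]) (hW V₂ hV₂)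
      (abs_nonneg _) (abs_nonneg _) (abs_nonneg _) ?_
    have : (a • p + b • q).2.2.1 = a * p.2.2.1 + b * q.2.2.1 := rfl
    rw [this]
    calc |a * p.2.2.1 + b * q.2.2.1| ≤ |a * p.2.2.1| + |b * q.2.2.1| := abs_add_le _ _
      _ = a * |p.2.2.1| + b * |q.2.2.1| := by
          rw [abs_mul, abs_mul, abs_of_nonneg ha, abs_of_nonneg hb]
  -- term 3
  have t3 : β ^ 2 * ‖(a • p + b • q).2.2.2‖ ^ 2 / (2 * V₃ ((a • p + b • q).1)) ≤
      a * (β ^ 2 * ‖p.2.2.2‖ ^ 2 / (2 * V₃ p.1)) +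
        b * (β ^ 2 * ‖q.2.2.2‖ ^ 2 / (2 * V₃ q.1)) := by
    rw [hcomb]
    have e : ∀ x : EuclideanSpace ℝ (Fin d), β ^ 2 * ‖x‖ ^ 2 = (|β| * ‖x‖) ^ 2 := by
      intro x; rw [mul_pow, sq_abs]
    rw [e ((a • p + b • q).2.2.2), e p.2.2.2, e q.2.2.2]
    refine frac_key a b (|β| * ‖p.2.2.2‖) (|β| * ‖q.2.2.2‖) _ _ _ _ ha hb hab
      (by linarith [hV₃pos _ hpS]) (by linarith [hV₃pos _ hqS]) (hW V₃ hV₃)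
      (by positivity) (by positivity) (by positivity) ?_
    have h0 : (a • p + b • q).2.2.2 = a • p.2.2.2 + b • q.2.2.2 := rfl
    rw [h0]
    calc |β| * ‖a • p.2.2.2 + b • q.2.2.2‖
        ≤ |β| * (‖a • p.2.2.2‖ + ‖b • q.2.2.2‖) := by
          exact mul_le_mul_of_nonneg_left (norm_add_le _ _) (abs_nonneg _)
      _ = a * (|β| * ‖p.2.2.2‖) + b * (|β| * ‖q.2.2.2‖) := by
          rw [norm_smul, norm_smul, Real.norm_eq_abs, Real.norm_eq_abs,
            abs_of_nonneg ha, abs_of_nonneg hb]; ring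
  simp only [hcomb, smul_eq_mul] at *
  linarith
end

section
/- Define f : (0, ∞) → ℝ by f(ρ) = (ρ − 1)/log ρ for ρ ≠ 1 and f(1) = 1. Then f(ρ) > 0 for all ρ > 0, and f is concave on (0, ∞). -/
/-- The scalar mobility `f(ρ) = (ρ − 1)/log ρ` for `ρ ≠ 1`, `f(1) = 1`. -/
noncomputable def mobilityLog (ρ : ℝ) : ℝ :=
  if ρ = 1 then 1 else (ρ - 1) / Real.log ρ

lemma mobilityLog_continuous_rpow {x : ℝ} (hx : 0 < x) :
    Continuous fun s : ℝ => x ^ s := by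
  have : Continuous fun s : ℝ => Real.exp (Real.log x * s) :=
    Real.continuous_exp.comp (continuous_const.mul continuous_id)
  exact this.congr fun s => by rw [Real.rpow_def_of_pos hx, mul_comm]

lemma mobilityLog_eq_integral {x : ℝ} (hx : 0 < x) :
    mobilityLog x = ∫ s in (0:ℝ)..1, x ^ s := by
  rcases eq_or_ne x 1 with rfl | hx1
  · simp [mobilityLog]
  · set c := Real.log x with hc
    have hc0 : c ≠ 0 := Real.log_ne_zero_of_pos_of_ne_one hx hx1
    have hrw : ∀ s : ℝ, x ^ s = Real.exp (c * s) := fun s => by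
      rw [Real.rpow_def_of_pos hx, mul_comm]
    have hderiv : ∀ s ∈ Set.uIcc (0:ℝ) 1,
        HasDerivAt (fun s => Real.exp (c * s) / c) (Real.exp (c * s)) s := by
      intro s _
      have h1 : HasDerivAt (fun s : ℝ => c * s) c s := by
        simpa using (hasDerivAt_id s).const_mul c
      have h2 := (h1.exp).div_const c
      simpa [mul_div_assoc, div_self hc0] using h2
    have hcont : IntervalIntegrable (fun s => Real.exp (c * s)) MeasureTheory.volume 0 1 :=
      (Real.continuous_exp.comp (continuous_const.mul continuous_id)).intervalIntegrable 0 1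
    have hint : ∫ s in (0:ℝ)..1, Real.exp (c * s)
        = Real.exp (c * 1) / c - Real.exp (c * 0) / c :=
      intervalIntegral.integral_eq_sub_of_hasDerivAt hderiv hcont
    calc mobilityLog x = (x - 1) / c := by simp [mobilityLog, hx1, hc]
      _ = Real.exp (c * 1) / c - Real.exp (c * 0) / c := by
          rw [mul_one, mul_zero, Real.exp_zero, hc, Real.exp_log hx]; ring
      _ = ∫ s in (0:ℝ)..1, Real.exp (c * s) := hint.symm
      _ = ∫ s in (0:ℝ)..1, x ^ s := by simp [hrw]

/-- `f(ρ) = (ρ − 1)/log ρ` (with `f(1) = 1`) is positive and concave on `(0, ∞)`. -/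
theorem mobilityLog_pos_and_concave :
    (∀ ρ : ℝ, 0 < ρ → 0 < mobilityLog ρ) ∧
      ConcaveOn ℝ (Set.Ioi (0 : ℝ)) mobilityLog := by
  constructor
  · intro ρ hρ
    rcases eq_or_ne ρ 1 with rfl | h1
    · simp [mobilityLog]
    · rw [mobilityLog, if_neg h1]
      rcases lt_or_gt_of_ne h1 with h | h
      · have hlog : Real.log ρ < 0 := Real.log_neg hρ h
        exact div_pos_of_neg_of_neg (by linarith) hlog
      · exact div_pos (by linarith) (Real.log_pos h)
  · refine ⟨convex_Ioi 0, fun x hx y hy a b ha hb hab => ?_⟩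
    have hx0 : (0:ℝ) < x := hx
    have hy0 : (0:ℝ) < y := hy
    have hz0 : 0 < a * x + b * y := by
      rcases ha.lt_or_eq with ha' | ha'
      · have : 0 ≤ b * y := mul_nonneg hb hy0.le
        nlinarith
      · have hb1 : b = 1 := by linarith
        simp [← ha', hb1, hy0]
    simp only [smul_eq_mul]
    rw [mobilityLog_eq_integral hx0, mobilityLog_eq_integral hy0,
      mobilityLog_eq_integral hz0]
    have hix : IntervalIntegrable (fun s : ℝ => x ^ s) MeasureTheory.volume 0 1 :=
      (mobilityLog_continuous_rpow hx0).intervalIntegrable 0 1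
    have hiy : IntervalIntegrable (fun s : ℝ => y ^ s) MeasureTheory.volume 0 1 :=
      (mobilityLog_continuous_rpow hy0).intervalIntegrable 0 1
    have hiz : IntervalIntegrable (fun s : ℝ => (a * x + b * y) ^ s) MeasureTheory.volume 0 1 :=
      (mobilityLog_continuous_rpow hz0).intervalIntegrable 0 1
    have hsum : IntervalIntegrable (fun s : ℝ => a * x ^ s + b * y ^ s)
        MeasureTheory.volume 0 1 :=
      ((continuous_const.mul (mobilityLog_continuous_rpow hx0)).add
        (continuous_const.mul (mobilityLog_continuous_rpow hy0))).intervalIntegrable 0 1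
    have hmono : ∫ s in (0:ℝ)..1, (a * x ^ s + b * y ^ s)
        ≤ ∫ s in (0:ℝ)..1, (a * x + b * y) ^ s := by
      refine intervalIntegral.integral_mono_on zero_le_one hsum hiz ?_
      intro s hs
      have := (Real.concaveOn_rpow hs.1 hs.2).2 (Set.mem_Ici.2 hx0.le)
        (Set.mem_Ici.2 hy0.le) ha hb hab
      simpa using this
    have hlin : ∫ s in (0:ℝ)..1, (a * x ^ s + b * y ^ s)
        = a * (∫ s in (0:ℝ)..1, x ^ s) + b * ∫ s in (0:ℝ)..1, y ^ s := by
      rw [intervalIntegral.integral_add (hix.const_mul a) (hiy.const_mul b),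
        intervalIntegral.integral_const_mul, intervalIntegral.integral_const_mul]
    linarith [hmono]
end

section
/- Let d ≥ 1 and let Ω = [0,1]ᵈ ⊂ ℝᵈ be the closed unit cube with outward unit normal ν on its boundary ∂Ω. Let T > 0, β ∈ ℝ, let V₁, V₂ : ℝ → ℝ be continuous with V₁ > 0 and V₂ > 0 on ℝ, and let E : ℝ → ℝ be twice continuously differentiable. Let ρ : [0,T] × Ω → ℝ be continuously differentiable, let m : [0,T] × Ω → ℝᵈ be continuous and continuously differentiable in x with m·ν = 0 on [0,T] × ∂Ω, and let s : [0,T] × Ω → ℝ be continuous, such that ∂ₜρ + ∇·m − s = 0 on [0,T] × Ω. Define m̃ = m + βV₁(ρ)∇(E′(ρ)) and s̃ = s + βV₂(ρ)E′(ρ). Then ∫₀ᵀ∫_Ω [ ‖m̃‖²/(2V₁(ρ)) + |s̃|²/(2V₂(ρ)) ] dx dt = ∫₀ᵀ∫_Ω [ ‖m‖²/(2V₁(ρ)) + |s|²/(2V₂(ρ)) + (β²/2)V₁(ρ)‖∇(E′(ρ))‖² + (β²/2)V₂(ρ)|E′(ρ)|² ] dx dt + β ∫_Ω ( E(ρ(T,x))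 − E(ρ(0,x)) ) dx. -/
open MeasureTheory

/-- `i`-th partial derivative of a scalar field on `ℝᵈ`. -/
noncomputable def pd (d : ℕ) (f : (Fin d → ℝ) → ℝ) (i : Fin d) (x : Fin d → ℝ) : ℝ :=
  fderiv ℝ f x (Pi.single i 1)

/-- Divergence of a vector field on `ℝᵈ`. -/
noncomputable def divg (d : ℕ) (F : (Fin d → ℝ) → (Fin d → ℝ)) (x : Fin d → ℝ) : ℝ :=
  ∑ i, pd d (fun y => F y i) i x

lemma aux_mem_frontier {d : ℕ} {y : Fin d → ℝ} (hy : y ∈ Set.Icc (0 : Fin d → ℝ) 1)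
    {i : Fin d} (hi : y i = 0 ∨ y i = 1) :
    y ∈ frontier (Set.Icc (0 : Fin d → ℝ) 1) := by
  rw [(isClosed_Icc).frontier_eq]  -- frontier = Icc \ interior
  refine ⟨hy, fun hmem => ?_⟩
  rw [← Set.pi_univ_Icc, interior_pi_set Set.finite_univ] at hmem
  have := hmem i (Set.mem_univ i)
  simp only [interior_Icc, Set.mem_Ioo, Pi.zero_apply, Pi.one_apply] at this
  rcases hi with h | h <;> rw [h] at this <;> simp at this

lemma cont_pd {d : ℕ} {f : (Fin d → ℝ) → ℝ} (hf : ContDiff ℝ 1 f) (i : Fin d) :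
    Continuous (pd d f i) :=
  (hf.continuous_fderiv one_ne_zero).clm_apply continuous_const

lemma aux_div_thm {d : ℕ} (hd : 1 ≤ d) (F : (Fin d → ℝ) → (Fin d → ℝ))
    (hF : ∀ i, ContDiff ℝ 1 (fun y => F y i))
    (hbd : ∀ y ∈ Set.Icc (0 : Fin d → ℝ) 1, ∀ i, (y i = 0 ∨ y i = 1) → F y i = 0) :
    ∫ x in Set.Icc (0 : Fin d → ℝ) 1, divg d F x = 0 := by
  obtain ⟨n, rfl⟩ : ∃ n, d = n + 1 := ⟨d - 1, (Nat.succ_pred_eq_of_pos hd).symm⟩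
  have h := integral_divergence_of_hasFDerivAt_off_countable'
    (0 : Fin (n+1) → ℝ) 1 (zero_le_one) (fun i y => F y i)
    (fun i y => fderiv ℝ (fun z => F z i) y) ∅ Set.countable_empty
    (fun i => (hF i).continuous.continuousOn)
    (fun x _ i => ((hF i).differentiable one_ne_zero x).hasFDerivAt)
    (by
      apply (Continuous.integrableOn_Icc ?_)
      exact continuous_finset_sum _ fun i _ => cont_pd (hF i) i)
  rw [show (∫ x in Set.Icc (0:Fin (n+1)→ℝ) 1, divg (n+1) F x)
      = ∫ x in Set.Icc (0:Fin (n+1)→ℝ) 1, ∑ i, fderiv ℝ (fun z => F z i) x (Pi.single i 1) from rfl,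
    h]
  apply Finset.sum_eq_zero
  intro i _
  have hz : ∀ (c : ℝ), (c = 0 ∨ c = 1) →
      ∀ x ∈ Set.Icc ((0:Fin (n+1)→ℝ) ∘ i.succAbove) ((1 : Fin (n+1) → ℝ) ∘ i.succAbove),
        F (i.insertNth c x) i = 0 := by
    intro c hc x hx
    apply hbd
    · refine Fin.insertNth_mem_Icc.2 ⟨?_, ?_⟩
      · rcases hc with h | h <;> simp [h]
      · exact hx
    · simp [hc]
  rw [sub_eq_zero]
  have e : ∀ (c : ℝ), c = 0 ∨ c = 1 →
      (∫ (x : Fin n → ℝ) in Set.Icc ((0 : Fin (n+1) → ℝ) ∘ i.succAbove)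
          ((1 : Fin (n+1) → ℝ) ∘ i.succAbove), F (i.insertNth c x) i) = 0 := by
    intro c hc
    rw [setIntegral_congr_fun (g := fun _ => (0:ℝ)) measurableSet_Icc (fun x hx => hz c hc x hx)]
    simp
  exact (e _ (Or.inr rfl)).trans (e _ (Or.inl rfl)).symm

/-- The integral identity behind the scalar mean-field control reformulation: if
`∂ₜρ + ∇·m − s = 0` on `[0,T] × [0,1]ᵈ` with no-flux boundary condition for `m` on the
cube (at a boundary point `x` with `x i ∈ {0,1}` the outward normal is `∓eᵢ`, so `m·ν = 0`
means the vanishing of the corresponding component), and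
`m̃ = m + βV₁(ρ)∇(E′(ρ))`, `s̃ = s + βV₂(ρ)E′(ρ)`, then
`∫₀ᵀ∫_Ω [‖m̃‖²/(2V₁ρ) + s̃²/(2V₂ρ)]
  = ∫₀ᵀ∫_Ω [‖m‖²/(2V₁ρ) + s²/(2V₂ρ) + (β²/2)V₁(ρ)‖∇E′(ρ)‖² + (β²/2)V₂(ρ)E′(ρ)²]
    + β∫_Ω (E(ρ(T,·)) − E(ρ(0,·)))`. -/
theorem scalar_mfc_energy_identity (d : ℕ) (hd : 1 ≤ d) (T : ℝ) (hT : 0 < T) (β : ℝ)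
    (V₁ V₂ : ℝ → ℝ) (hV₁c : Continuous V₁) (hV₂c : Continuous V₂)
    (hV₁pos : ∀ r, 0 < V₁ r) (hV₂pos : ∀ r, 0 < V₂ r)
    (E : ℝ → ℝ) (hE : ContDiff ℝ 2 E)
    (ρ : ℝ → (Fin d → ℝ) → ℝ)
    (hρ : ContDiff ℝ 1 (fun q : ℝ × (Fin d → ℝ) => ρ q.1 q.2))
    (m : ℝ → (Fin d → ℝ) → (Fin d → ℝ))
    (hmc : Continuous (fun q : ℝ × (Fin d → ℝ) => m q.1 q.2))
    (hmx : ∀ t, ∀ i : Fin d, ContDiff ℝ 1 (fun x => m t x i))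
    (s : ℝ → (Fin d → ℝ) → ℝ)
    (hsc : Continuous (fun q : ℝ × (Fin d → ℝ) => s q.1 q.2))
    (hbc : ∀ t ∈ Set.Icc (0 : ℝ) T,
      ∀ x ∈ frontier (Set.Icc (0 : Fin d → ℝ) 1), ∀ i : Fin d,
        (x i = 0 ∨ x i = 1) → m t x i = 0)
    (hpde : ∀ t ∈ Set.Icc (0 : ℝ) T, ∀ x ∈ Set.Icc (0 : Fin d → ℝ) 1,
      deriv (fun τ => ρ τ x) t + divg d (m t) x - s t x = 0)
    (mt : ℝ → (Fin d → ℝ) → (Fin d → ℝ))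
    (st : ℝ → (Fin d → ℝ) → ℝ)
    (hmt : ∀ t x i, mt t x i
      = m t x i + β * (V₁ (ρ t x) * pd d (fun z => deriv E (ρ t z)) i x))
    (hst : ∀ t x, st t x = s t x + β * (V₂ (ρ t x) * deriv E (ρ t x))) :
    (∫ t in Set.Icc (0 : ℝ) T, ∫ x in Set.Icc (0 : Fin d → ℝ) 1,
        ((∑ i, (mt t x i) ^ 2) / (2 * V₁ (ρ t x))
          + (st t x) ^ 2 / (2 * V₂ (ρ t x))))
      = (∫ t in Set.Icc (0 : ℝ) T, ∫ x in Set.Icc (0 : Fin d → ℝ) 1,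
          ((∑ i, (m t x i) ^ 2) / (2 * V₁ (ρ t x))
            + (s t x) ^ 2 / (2 * V₂ (ρ t x))
            + (β ^ 2 / 2) * V₁ (ρ t x)
                * (∑ i, (pd d (fun z => deriv E (ρ t z)) i x) ^ 2)
            + (β ^ 2 / 2) * V₂ (ρ t x) * (deriv E (ρ t x)) ^ 2))
        + β * ∫ x in Set.Icc (0 : Fin d → ℝ) 1, (E (ρ T x) - E (ρ 0 x)) := by
  have hIt : MeasurableSet (Set.Icc (0:ℝ) T) := measurableSet_Icc
  have hΩm : MeasurableSet (Set.Icc (0 : Fin d → ℝ) 1) := measurableSet_Icc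
  -- smoothness of E
  have hE' : ContDiff ℝ 1 (deriv E) := by
    rw [show (2 : WithTop ℕ∞) = 1 + 1 by norm_num] at hE
    exact (contDiff_succ_iff_deriv.mp hE).2.2
  have hEd : Differentiable ℝ E := hE.differentiable (by norm_num)
  have hE'd : Differentiable ℝ (deriv E) := hE'.differentiable one_ne_zero
  have hE''c : Continuous (deriv (deriv E)) := hE'.continuous_deriv le_rfl
  have hE'c : Continuous (deriv E) := hE'.continuous
  -- joint function and its derivative
  have hRc : Continuous (fun q : ℝ × (Fin d → ℝ) => ρ q.1 q.2) := hρ.continuous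
  have hRd : Differentiable ℝ (fun q : ℝ × (Fin d → ℝ) => ρ q.1 q.2) :=
    hρ.differentiable one_ne_zero
  set D : ℝ × (Fin d → ℝ) → (ℝ × (Fin d → ℝ)) →L[ℝ] ℝ :=
    fderiv ℝ (fun q : ℝ × (Fin d → ℝ) => ρ q.1 q.2) with hDdef
  have hDc : Continuous D := hρ.continuous_fderiv one_ne_zero
  -- slices of ρ
  have hρx : ∀ t, ContDiff ℝ 1 (fun x => ρ t x) := fun t =>
    hρ.comp (contDiff_const.prodMk contDiff_id)
  have hρxf : ∀ t x, HasFDerivAt (fun y => ρ t y)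
      ((D (t, x)).comp (ContinuousLinearMap.inr ℝ ℝ (Fin d → ℝ))) x := fun t x =>
    (hRd (t, x)).hasFDerivAt.comp x (hasFDerivAt_prodMk_right t x)
  set Dt : ℝ → (Fin d → ℝ) → ℝ := fun t x => D (t, x) ((1:ℝ), (0 : Fin d → ℝ)) with hDtdef
  have hρt : ∀ t x, HasDerivAt (fun τ => ρ τ x) (Dt t x) t := by
    intro t x
    have h1 : HasDerivAt (fun τ : ℝ => (τ, x)) ((1:ℝ), (0 : Fin d → ℝ)) t :=
      (hasDerivAt_id t).prodMk (hasDerivAt_const t x)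
    exact (hRd (t, x)).hasFDerivAt.comp_hasDerivAt t h1
  have hderiv_eq : ∀ t x, deriv (fun τ => ρ τ x) t = Dt t x := fun t x => (hρt t x).deriv
  have hDtc : Continuous (fun q : ℝ × (Fin d → ℝ) => Dt q.1 q.2) :=
    hDc.clm_apply continuous_const
  -- the composition deriv E ∘ ρ t and its spatial derivative
  have hφx : ∀ t, ContDiff ℝ 1 (fun z => deriv E (ρ t z)) := fun t => hE'.comp (hρx t)
  have hpd_f : ∀ t x, HasFDerivAt (fun z => deriv E (ρ t z))
      (deriv (deriv E) (ρ t x) •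
        ((D (t, x)).comp (ContinuousLinearMap.inr ℝ ℝ (Fin d → ℝ)))) x := fun t x =>
    ((hE'd (ρ t x)).hasDerivAt).comp_hasFDerivAt x (hρxf t x)
  have hp_eq : ∀ t x i, pd d (fun z => deriv E (ρ t z)) i x
      = deriv (deriv E) (ρ t x) * D (t, x) ((0:ℝ), Pi.single i 1) := by
    intro t x i
    rw [pd, (hpd_f t x).fderiv]
    rfl
  have hpc : ∀ i, Continuous (fun q : ℝ × (Fin d → ℝ) =>
      pd d (fun z => deriv E (ρ q.1 z)) i q.2) := by
    intro i
    have he : (fun q : ℝ × (Fin d → ℝ) => pd d (fun z => deriv E (ρ q.1 z)) i q.2)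
        = fun q => deriv (deriv E) (ρ q.1 q.2) * D (q.1, q.2) ((0:ℝ), Pi.single i 1) :=
      funext fun q => hp_eq q.1 q.2 i
    rw [he]
    exact (hE''c.comp hRc).mul (hDc.clm_apply continuous_const)
  -- joint continuity of the basic fields
  have hmci : ∀ i, Continuous (fun q : ℝ × (Fin d → ℝ) => m q.1 q.2 i) :=
    fun i => (continuous_apply i).comp hmc
  have hφc : Continuous (fun q : ℝ × (Fin d → ℝ) => deriv E (ρ q.1 q.2)) := hE'c.comp hRc
  have hV₁ρ : Continuous (fun q : ℝ × (Fin d → ℝ) => V₁ (ρ q.1 q.2)) := hV₁c.comp hRc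
  have hV₂ρ : Continuous (fun q : ℝ × (Fin d → ℝ) => V₂ (ρ q.1 q.2)) := hV₂c.comp hRc
  have hmtc : ∀ i, Continuous (fun q : ℝ × (Fin d → ℝ) => mt q.1 q.2 i) := by
    intro i
    have he : (fun q : ℝ × (Fin d → ℝ) => mt q.1 q.2 i)
        = fun q : ℝ × (Fin d → ℝ) => m q.1 q.2 i
            + β * (V₁ (ρ q.1 q.2) * pd d (fun z => deriv E (ρ q.1 z)) i q.2) :=
      funext fun q => hmt q.1 q.2 i
    rw [he]
    exact (hmci i).add (continuous_const.mul (hV₁ρ.mul (hpc i)))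
  have hstc : Continuous (fun q : ℝ × (Fin d → ℝ) => st q.1 q.2) := by
    have he : (fun q : ℝ × (Fin d → ℝ) => st q.1 q.2)
        = fun q : ℝ × (Fin d → ℝ) => s q.1 q.2 + β * (V₂ (ρ q.1 q.2) * deriv E (ρ q.1 q.2)) :=
      funext fun q => hst q.1 q.2
    rw [he]
    exact hsc.add (continuous_const.mul (hV₂ρ.mul hφc))
  -- the four integrands
  set L : ℝ × (Fin d → ℝ) → ℝ := fun q =>
    (∑ i, (mt q.1 q.2 i) ^ 2) / (2 * V₁ (ρ q.1 q.2))
      + (st q.1 q.2) ^ 2 / (2 * V₂ (ρ q.1 q.2)) with hLdef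
  set Rg : ℝ × (Fin d → ℝ) → ℝ := fun q =>
    (∑ i, (m q.1 q.2 i) ^ 2) / (2 * V₁ (ρ q.1 q.2))
      + (s q.1 q.2) ^ 2 / (2 * V₂ (ρ q.1 q.2))
      + (β ^ 2 / 2) * V₁ (ρ q.1 q.2) * (∑ i, (pd d (fun z => deriv E (ρ q.1 z)) i q.2) ^ 2)
      + (β ^ 2 / 2) * V₂ (ρ q.1 q.2) * (deriv E (ρ q.1 q.2)) ^ 2 with hRgdef
  set H : ℝ × (Fin d → ℝ) → ℝ := fun q =>
    (∑ i, m q.1 q.2 i * pd d (fun z => deriv E (ρ q.1 z)) i q.2)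
      + s q.1 q.2 * deriv E (ρ q.1 q.2) with hHdef
  set G : ℝ × (Fin d → ℝ) → ℝ := fun q => deriv E (ρ q.1 q.2) * Dt q.1 q.2 with hGdef
  have hLc : Continuous L := by
    rw [hLdef]
    exact ((continuous_finset_sum _ fun i _ => (hmtc i).pow 2).div
        (continuous_const.mul hV₁ρ) fun q => (mul_pos two_pos (hV₁pos _)).ne').add
      ((hstc.pow 2).div (continuous_const.mul hV₂ρ) fun q => (mul_pos two_pos (hV₂pos _)).ne')
  have hRgc : Continuous Rg := by
    rw [hRgdef]
    exact ((((continuous_finset_sum _ fun i _ => (hmci i).pow 2).div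
        (continuous_const.mul hV₁ρ) fun q => (mul_pos two_pos (hV₁pos _)).ne').add
      (((hsc.pow 2).div (continuous_const.mul hV₂ρ) fun q => (mul_pos two_pos (hV₂pos _)).ne'))).add
      ((continuous_const.mul hV₁ρ).mul
        (continuous_finset_sum _ fun i _ => (hpc i).pow 2))).add
      ((continuous_const.mul hV₂ρ).mul (hφc.pow 2))
  have hHc : Continuous H := by
    rw [hHdef]
    exact (continuous_finset_sum _ fun i _ => (hmci i).mul (hpc i)).add (hsc.mul hφc)
  have hGc : Continuous G := by
    rw [hGdef]; exact hφc.mul hDtc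
  -- integrability on the compact product
  have hK : IsCompact ((Set.Icc (0:ℝ) T) ×ˢ (Set.Icc (0 : Fin d → ℝ) 1)) :=
    isCompact_Icc.prod isCompact_Icc
  have hLi : IntegrableOn L ((Set.Icc (0:ℝ) T) ×ˢ (Set.Icc (0 : Fin d → ℝ) 1))
      (volume.prod volume) := by
    rw [← Measure.volume_eq_prod]; exact hLc.continuousOn.integrableOn_compact hK
  have hRgi : IntegrableOn Rg ((Set.Icc (0:ℝ) T) ×ˢ (Set.Icc (0 : Fin d → ℝ) 1))
      (volume.prod volume) := by
    rw [← Measure.volume_eq_prod]; exact hRgc.continuousOn.integrableOn_compact hK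
  have hHi : IntegrableOn H ((Set.Icc (0:ℝ) T) ×ˢ (Set.Icc (0 : Fin d → ℝ) 1))
      (volume.prod volume) := by
    rw [← Measure.volume_eq_prod]; exact hHc.continuousOn.integrableOn_compact hK
  have hGi : IntegrableOn G ((Set.Icc (0:ℝ) T) ×ˢ (Set.Icc (0 : Fin d → ℝ) 1))
      (volume.prod volume) := by
    rw [← Measure.volume_eq_prod]; exact hGc.continuousOn.integrableOn_compact hK
  -- pointwise algebraic identity
  have halg : ∀ q : ℝ × (Fin d → ℝ), L q = Rg q + β * H q := by
    rintro ⟨t, x⟩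
    simp only [hLdef, hRgdef, hHdef]
    have hv1 : V₁ (ρ t x) ≠ 0 := (hV₁pos _).ne'
    have hv2 : V₂ (ρ t x) ≠ 0 := (hV₂pos _).ne'
    have hsum : ∑ i, (mt t x i) ^ 2
        = (∑ i, (m t x i) ^ 2)
          + (2 * β * V₁ (ρ t x)) * (∑ i, m t x i * pd d (fun z => deriv E (ρ t z)) i x)
          + (β ^ 2 * V₁ (ρ t x) ^ 2)
              * (∑ i, (pd d (fun z => deriv E (ρ t z)) i x) ^ 2) := by
      rw [Finset.mul_sum, Finset.mul_sum, ← Finset.sum_add_distrib, ← Finset.sum_add_distrib]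
      exact Finset.sum_congr rfl fun i _ => by rw [hmt]; ring
    rw [hsum, hst]
    field_simp
    ring
  -- per-time-slice divergence identity
  have key_t : ∀ t ∈ Set.Icc (0:ℝ) T,
      (∫ x in Set.Icc (0 : Fin d → ℝ) 1, H (t, x))
        = ∫ x in Set.Icc (0 : Fin d → ℝ) 1, G (t, x) := by
    intro t ht
    set F : (Fin d → ℝ) → (Fin d → ℝ) := fun y i => deriv E (ρ t y) * m t y i with hFdef
    have hFi : ∀ i, ContDiff ℝ 1 (fun y => F y i) := fun i => (hφx t).mul (hmx t i)
    have hmul : ∀ x i, pd d (fun y => F y i) i x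
        = m t x i * pd d (fun z => deriv E (ρ t z)) i x
          + deriv E (ρ t x) * pd d (fun y => m t y i) i x := by
      intro x i
      show fderiv ℝ (fun y => deriv E (ρ t y) * m t y i) x (Pi.single i 1) = _
      rw [fderiv_fun_mul (((hφx t).differentiable one_ne_zero) x) (((hmx t i).differentiable one_ne_zero) x)]
      simp only [ContinuousLinearMap.add_apply, ContinuousLinearMap.smul_apply, smul_eq_mul, pd]
      ring
    have hdivF : ∀ x, divg d F x
        = (∑ i, m t x i * pd d (fun z => deriv E (ρ t z)) i x)
          + deriv E (ρ t x) * divg d (m t) x := by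
      intro x
      show (∑ i, pd d (fun y => F y i) i x) = _
      rw [Finset.sum_congr rfl fun i _ => hmul x i, Finset.sum_add_distrib, ← Finset.mul_sum]
      rfl
    have hEqOn : ∀ x ∈ Set.Icc (0 : Fin d → ℝ) 1, H (t, x) = divg d F x + G (t, x) := by
      intro x hx
      have hp := hpde t ht x hx
      rw [hderiv_eq] at hp
      have hdm : divg d (m t) x = s t x - Dt t x := by linarith
      simp only [hHdef, hGdef, hdivF x, hdm]
      ring
    have hdivFc : Continuous (divg d F) := by
      unfold divg; exact continuous_finset_sum _ fun i _ => cont_pd (hFi i) i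
    have hGxc : Continuous (fun x => G (t, x)) :=
      hGc.comp (continuous_const.prodMk continuous_id)
    have hbd' : ∀ y ∈ Set.Icc (0 : Fin d → ℝ) 1, ∀ i, (y i = 0 ∨ y i = 1) → F y i = 0 := by
      intro y hy i hi
      have := hbc t ht y (aux_mem_frontier hy hi) i hi
      simp only [hFdef, this, mul_zero]
    calc (∫ x in Set.Icc (0 : Fin d → ℝ) 1, H (t, x))
        = ∫ x in Set.Icc (0 : Fin d → ℝ) 1, (divg d F x + G (t, x)) :=
          setIntegral_congr_fun hΩm hEqOn
      _ = (∫ x in Set.Icc (0 : Fin d → ℝ) 1, divg d F x)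
            + ∫ x in Set.Icc (0 : Fin d → ℝ) 1, G (t, x) :=
          integral_add (hdivFc.continuousOn.integrableOn_compact isCompact_Icc)
            (hGxc.continuousOn.integrableOn_compact isCompact_Icc)
      _ = ∫ x in Set.Icc (0 : Fin d → ℝ) 1, G (t, x) := by
          rw [aux_div_thm hd F hFi hbd', zero_add]
  -- per-space-slice fundamental theorem of calculus
  have key_x : ∀ x ∈ Set.Icc (0 : Fin d → ℝ) 1,
      (∫ t in Set.Icc (0:ℝ) T, G (t, x)) = E (ρ T x) - E (ρ 0 x) := by
    intro x hx
    have hgt : ∀ t : ℝ, HasDerivAt (fun τ => E (ρ τ x)) (G (t, x)) t := by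
      intro t
      have := ((hEd (ρ t x)).hasDerivAt).comp t (hρt t x)
      exact this
    have hgc : Continuous (fun t => G (t, x)) :=
      hGc.comp (continuous_id.prodMk continuous_const)
    rw [MeasureTheory.integral_Icc_eq_integral_Ioc, ← intervalIntegral.integral_of_le hT.le]
    exact intervalIntegral.integral_eq_sub_of_hasDerivAt (fun t _ => hgt t)
      (hgc.intervalIntegrable 0 T)
  -- assemble
  have hHeq : (∫ q in (Set.Icc (0:ℝ) T) ×ˢ (Set.Icc (0 : Fin d → ℝ) 1), H q
        ∂(volume.prod volume))
      = ∫ x in Set.Icc (0 : Fin d → ℝ) 1, (E (ρ T x) - E (ρ 0 x)) := by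
    rw [setIntegral_prod H hHi]
    rw [setIntegral_congr_fun hIt key_t]
    rw [← setIntegral_prod G hGi]
    have hGi' : Integrable G ((volume.restrict (Set.Icc (0:ℝ) T)).prod
        (volume.restrict (Set.Icc (0 : Fin d → ℝ) 1))) := by
      rw [Measure.prod_restrict]; exact hGi
    rw [← Measure.prod_restrict, integral_prod_symm G hGi']
    exact setIntegral_congr_fun hΩm key_x
  calc (∫ t in Set.Icc (0 : ℝ) T, ∫ x in Set.Icc (0 : Fin d → ℝ) 1,
        ((∑ i, (mt t x i) ^ 2) / (2 * V₁ (ρ t x)) + (st t x) ^ 2 / (2 * V₂ (ρ t x))))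
      = ∫ q in (Set.Icc (0:ℝ) T) ×ˢ (Set.Icc (0 : Fin d → ℝ) 1), L q
          ∂(volume.prod volume) := (setIntegral_prod L hLi).symm
    _ = ∫ q in (Set.Icc (0:ℝ) T) ×ˢ (Set.Icc (0 : Fin d → ℝ) 1), (Rg q + β * H q)
          ∂(volume.prod volume) :=
        integral_congr_ae (Filter.Eventually.of_forall fun q => halg q)
    _ = (∫ q in (Set.Icc (0:ℝ) T) ×ˢ (Set.Icc (0 : Fin d → ℝ) 1), Rg q
          ∂(volume.prod volume))
        + β * ∫ q in (Set.Icc (0:ℝ) T) ×ˢ (Set.Icc (0 : Fin d → ℝ) 1), H q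
          ∂(volume.prod volume) := by
        rw [integral_add hRgi (hHi.const_mul β), integral_const_mul]
    _ = (∫ t in Set.Icc (0 : ℝ) T, ∫ x in Set.Icc (0 : Fin d → ℝ) 1,
          ((∑ i, (m t x i) ^ 2) / (2 * V₁ (ρ t x))
            + (s t x) ^ 2 / (2 * V₂ (ρ t x))
            + (β ^ 2 / 2) * V₁ (ρ t x)
                * (∑ i, (pd d (fun z => deriv E (ρ t z)) i x) ^ 2)
            + (β ^ 2 / 2) * V₂ (ρ t x) * (deriv E (ρ t x)) ^ 2))
        + β * ∫ x in Set.Icc (0 : Fin d → ℝ) 1, (E (ρ T x) - E (ρ 0 x)) := by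
        rw [setIntegral_prod Rg hRgi, hHeq]
end
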